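/- Σ⁰₂-double negation elimination for the reals is Weihrauch equivalent to the discrete limit operator: Σ⁰₂-DNE_ℝ ≡_W Lim_ℕ. -/

import Mathlib

open scoped Classical

noncomputable section

/-- Baire space. -/
abbrev Baire : Type := ℕ → ℕ

/-- A partial multifunction with explicit domain. -/
structure MultiFn (α : Type*) where
  Dom : Set α
  val : α → Set α

/-- The length-`k` prefix of `x` as a list. -/
def prefixList (x : Baire) (k : ℕ) : List ℕ := List.ofFn fun i : Fin k => x i

/-- The raw behaviour of the (code of a) partial continuous function `t` on the
finite input `l` at position `n`. -/
def raw (t : Baire) (l : List ℕ) (n : ℕ) : Option ℕ :=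
  match t (Nat.pair (Encodable.encode l) n) with
  | 0 => none
  | Nat.succ v => some v

/-- `evalB t x y` : the partial (continuous) function coded by `t` is defined at `x`
with value `y`; each value `y n` is read off at the minimal prefix of `x` on which
the code converges. Every such function is continuous, and every partial continuous
function on Baire space arises this way. -/
def evalB (t x y : Baire) : Prop :=
  ∀ n, ∃ k, raw t (prefixList x k) n = some (y n) ∧
    ∀ j < k, raw t (prefixList x j) n = none

/-- Pairing on Baire space. -/
def pairB (x y : Baire) : Baire := fun n => Nat.pair (x n) (y n)

def fstB (z : Baire) : Baire := fun n => (Nat.unpair (z n)).1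

def sndB (z : Baire) : Baire := fun n => (Nat.unpair (z n)).2

/-- Weihrauch reduction of `f` to `g` witnessed by an inner reduction (code) `h`
and an outer reduction (code) `k`. -/
def WRedBy (f g : MultiFn Baire) (h k : Baire) : Prop :=
  ∀ x ∈ f.Dom, ∃ hx, evalB h x hx ∧ hx ∈ g.Dom ∧
    ∀ y ∈ g.val hx, ∃ z, evalB k (pairB x y) z ∧ z ∈ f.val x

/-- Weihrauch reducibility (computable reductions). -/
def WRed (f g : MultiFn Baire) : Prop :=
  ∃ h k : Baire, Computable h ∧ Computable k ∧ WRedBy f g h k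

/-- Continuous Weihrauch reducibility. -/
def WRedC (f g : MultiFn Baire) : Prop := ∃ h k : Baire, WRedBy f g h k

/-- Weihrauch equivalence. -/
def WEquiv (f g : MultiFn Baire) : Prop := WRed f g ∧ WRed g f

/-! ## Reduction games -/

/-- Merge a finite list of Baire points into a single Baire point. -/
def mergeList (l : List Baire) : Baire := fun n =>
  if n = 0 then l.length
  else l.getD (Nat.unpair (n - 1)).1 (fun _ => 0) (Nat.unpair (n - 1)).2

/-- Encode a move of Player II (a flag together with a Baire point) as a Baire point;
the flag `true` means "declare victory", `false` means "query". -/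
def encodeMove (m : Bool × Baire) : Baire := fun n =>
  if n = 0 then (if m.1 then 1 else 0) else m.2 (n - 1)

/-- `τ` is a (total continuous) strategy for Player II coded by the Baire point `t`. -/
def StrategyCoded (t : Baire) (τ : List Baire → Bool × Baire) : Prop :=
  ∀ l : List Baire, evalB t (mergeList l) (encodeMove (τ l))

/-- The history of the play where Player I uses `σ` and Player II uses `τ`:
after round `n`, the lists of the moves of I and of II so far. Player I's
first move is `σ []`. -/
def hist (σ : List (Bool × Baire) → Baire) (τ : List Baire → Bool × Baire) :
    ℕ → List Baire × List (Bool × Baire)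
  | 0 => ([σ []], [τ [σ []]])
  | n + 1 =>
    let h := hist σ τ n
    let x := σ h.2
    (h.1 ++ [x], h.2 ++ [τ (h.1 ++ [x])])

/-- Player I's move at round `n`. -/
def xmove (σ : List (Bool × Baire) → Baire) (τ : List Baire → Bool × Baire)
    (n : ℕ) : Baire :=
  (hist σ τ n).1.getD n (fun _ => 0)

/-- Player II's move at round `n`. -/
def ymove (σ : List (Bool × Baire) → Baire) (τ : List Baire → Bool × Baire)
    (n : ℕ) : Bool × Baire :=
  (hist σ τ n).2.getD n (true, fun _ => 0)

/-- Player I violates the rules of the game `G(f,g)` at round `m`. -/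
def IViol (f g : MultiFn Baire) (σ : List (Bool × Baire) → Baire)
    (τ : List Baire → Bool × Baire) (m : ℕ) : Prop :=
  (m = 0 ∧ xmove σ τ 0 ∉ f.Dom) ∨
  (∃ m', m = m' + 1 ∧ (ymove σ τ m').1 = false ∧
    xmove σ τ m ∉ g.val (ymove σ τ m').2)

/-- Player II violates the rules of the game `G(f,g)` at round `m`
(II queried something outside the domain of `g`). -/
def IIViol (g : MultiFn Baire) (σ : List (Bool × Baire) → Baire)
    (τ : List Baire → Bool × Baire) (m : ℕ) : Prop :=
  (ymove σ τ m).1 = false ∧ (ymove σ τ m).2 ∉ g.Dom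

/-- Player II wins the play of `G(f,g)` determined by `σ` and `τ` :
either I violates the rules before II does, or II obeys the rules and
declares victory with an element of `f(x₀)`. -/
def IIWinsPlay (f g : MultiFn Baire) (σ : List (Bool × Baire) → Baire)
    (τ : List Baire → Bool × Baire) : Prop :=
  (∃ m, IViol f g σ τ m ∧ ∀ k < m, ¬ IIViol g σ τ k) ∨
  (∃ m, (∀ k < m, (ymove σ τ k).1 = false) ∧ (ymove σ τ m).1 = true ∧
    (∀ k ≤ m, ¬ IIViol g σ τ k) ∧ (ymove σ τ m).2 ∈ f.val (xmove σ τ 0))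

/-- Generalized Weihrauch reducibility: Player II has a computable winning
strategy in the reduction game `G(f,g)`. -/
def GWRed (f g : MultiFn Baire) : Prop :=
  ∃ (t : Baire) (τ : List Baire → Bool × Baire),
    Computable t ∧ StrategyCoded t τ ∧ ∀ σ, IIWinsPlay f g σ τ

/-- Continuous generalized Weihrauch reducibility: Player II has a continuous
winning strategy in the reduction game `G(f,g)`. -/
def GWRedC (f g : MultiFn Baire) : Prop :=
  ∃ (t : Baire) (τ : List Baire → Bool × Baire),
    StrategyCoded t τ ∧ ∀ σ, IIWinsPlay f g σ τ

/-- The multifunction `g^Game` arising from the reduction game for `g`: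
an input encodes a pair `(x₀, t)` where `t` codes a strategy `τ` for Player II
which declares victory against every play of Player I with first move `x₀`;
outputs are the values with which II declares victory along some such play. -/
def gameOf (g : MultiFn Baire) : MultiFn Baire where
  Dom := {z | ∃ τ, StrategyCoded (sndB z) τ ∧
    ∀ σ, σ [] = fstB z → ∃ m, (ymove σ τ m).1 = true}
  val := fun z => {u | ∃ τ, StrategyCoded (sndB z) τ ∧
    ∃ σ, σ [] = fstB z ∧ ∃ m, (ymove σ τ m).1 = true ∧ (ymove σ τ m).2 = u}

/-! ## Compositional products, parallelizations, coproducts -/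

/-- Composition of partial multifunctions. -/
def mcomp (h g : MultiFn Baire) : MultiFn Baire where
  Dom := {x | x ∈ g.Dom ∧ g.val x ⊆ h.Dom}
  val := fun x => ⋃ y ∈ g.val x, h.val y

/-- `s` is a compositional product `h ⋆ g` : a Weihrauch-minimal element of the
set of compositions `h₀ ∘ g₀` with `g₀ ≤_W g` and `h₀ ≤_W h`. -/
def IsCompProd (h g s : MultiFn Baire) : Prop :=
  (∃ g₀ h₀, WRed g₀ g ∧ WRed h₀ h ∧ WEquiv s (mcomp h₀ g₀)) ∧
  (∀ g₀ h₀, WRed g₀ g → WRed h₀ h → WRed s (mcomp h₀ g₀))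

def tupLen (z : Baire) : ℕ := z 0

def tupProj (z : Baire) (i : ℕ) : Baire := fun m => z (Nat.pair i m + 1)

/-- Finite parallelization `f*`. -/
def finPar (f : MultiFn Baire) : MultiFn Baire where
  Dom := {z | ∀ i < tupLen z, tupProj z i ∈ f.Dom}
  val := fun z => {w | tupLen w = tupLen z ∧
    ∀ i < tupLen z, tupProj w i ∈ f.val (tupProj z i)}

/-- Product of two multifunctions. -/
def prodMF (f g : MultiFn Baire) : MultiFn Baire where
  Dom := {z | fstB z ∈ f.Dom ∧ sndB z ∈ g.Dom}
  val := fun z => {w | fstB w ∈ f.val (fstB z) ∧ sndB w ∈ g.val (sndB z)}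

def tailB (z : Baire) : Baire := fun n => z (n + 1)

/-- Coproduct (disjoint union) of a sequence of multifunctions. -/
def coprod (s : ℕ → MultiFn Baire) : MultiFn Baire where
  Dom := {z | tailB z ∈ (s (z 0)).Dom}
  val := fun z => (s (z 0)).val (tailB z)

/-- The identity multifunction (the Weihrauch degree `1`). -/
def idMF : MultiFn Baire := ⟨Set.univ, fun x => {x}⟩

/-! ## Trees -/

def IsTree (T : Set (List Bool)) : Prop := ∀ σ ∈ T, ∀ τ, τ <+: σ → τ ∈ T

def InfTree (T : Set (List Bool)) : Prop := ∀ ℓ, ∃ σ ∈ T, σ.length = ℓ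

def IsPathOf (T : Set (List Bool)) (p : ℕ → Bool) : Prop :=
  ∀ n, (List.ofFn fun i : Fin n => p i) ∈ T

/-- An all-or-unique tree: at each level, either all strings or exactly one. -/
def AouTree (T : Set (List Bool)) : Prop :=
  IsTree T ∧ ∀ ℓ, ({σ | σ ∈ T ∧ σ.length = ℓ} = {σ : List Bool | σ.length = ℓ} ∨
    ∃ σ₀, {σ | σ ∈ T ∧ σ.length = ℓ} = {σ₀})

/-- A 2-tree: exactly two nodes at each (positive) level. -/
def TwoTree (T : Set (List Bool)) : Prop :=
  IsTree T ∧ ∀ ℓ > 0, ∃ a b : List Bool, a ≠ b ∧ {σ | σ ∈ T ∧ σ.length = ℓ} = {a, b}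

def BranchNodes (T : Set (List Bool)) : Set (List Bool) :=
  {σ | σ ++ [false] ∈ T ∧ σ ++ [true] ∈ T}

/-- A rational 2-tree: a 2-tree with only finitely many branching nodes. -/
def RatTwoTree (T : Set (List Bool)) : Prop := TwoTree T ∧ (BranchNodes T).Finite

/-- A basic clopen tree: the set of strings comparable with a fixed string. -/
def BasicClopenTree (T : Set (List Bool)) : Prop :=
  ∃ σ : List Bool, T = {τ | τ <+: σ ∨ σ <+: τ}

/-- A Baire point codes a tree by its characteristic function. -/
def treeOf (x : Baire) : Set (List Bool) := {σ | x (Encodable.encode σ) = 1}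

/-- A Baire point codes an infinite binary sequence. -/
def pathOf (y : Baire) : ℕ → Bool := fun n => y n != 0

/-- Weak König's lemma restricted to the class `C` of trees, as a multifunction. -/
def WKLof (C : Set (List Bool) → Prop) : MultiFn Baire where
  Dom := {x | C (treeOf x) ∧ InfTree (treeOf x)}
  val := fun x => {y | IsPathOf (treeOf x) (pathOf y)}

def WKL : MultiFn Baire := WKLof IsTree
def WKLle2 : MultiFn Baire := WKLof TwoTree
def WKLeq2 : MultiFn Baire := WKLof RatTwoTree
def WKLaou : MultiFn Baire := WKLof AouTree
def WKLclop : MultiFn Baire := WKLof BasicClopenTree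

/-! ## Arithmetical principles as multifunctions -/

/-- The discrete limit operator on ℕ. -/
def LimN : MultiFn Baire where
  Dom := {x | ∃ v N, ∀ n ≥ N, x n = v}
  val := fun x => {u | ∃ v, (∀ m, u m = v) ∧ ∃ N, ∀ n ≥ N, x n = v}

/-- `Σ⁰₂` double negation elimination, as a multifunction: the input codes a
decidable relation `R(n,m) ≡ α(⟨n,m⟩) = 0` with `¬¬∃n∀m R(n,m)`; outputs code
some `n` with `∀m R(n,m)`. -/
def DNE2 : MultiFn Baire where
  Dom := {α | ¬¬ ∃ n, ∀ m, α (Nat.pair n m) = 0}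
  val := fun α => {u | ∃ n, (∀ m, u m = n) ∧ ∀ m, α (Nat.pair n m) = 0}

/-- Ramsey's theorem for singletons and two colours. -/
def RT12 : MultiFn Baire where
  Dom := {c | ∀ n, c n ≤ 1}
  val := fun c => {h | (∀ n, h n ≤ 1) ∧ {n | h n = 1}.Infinite ∧
    ∃ i, ∀ n, h n = 1 → c n = i}

/-- The `i`-th `Σ⁰₂` statement coded by `α`. -/
def Sig2 (α : Baire) (i : ℕ) : Prop := ∃ a, ∀ b, α (Nat.pair i (Nat.pair a b)) = 0

/-- `Σ⁰₂` de Morgan's law, as a multifunction. -/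
def DML2 : MultiFn Baire where
  Dom := {α | ¬ (Sig2 α 0 ∧ Sig2 α 1)}
  val := fun α => {u | ∃ j ≤ 1, (∀ m, u m = j) ∧ ¬ Sig2 α j}

/-- The limited principle of omniscience. -/
def LPO : MultiFn Baire where
  Dom := Set.univ
  val := fun p => {u | ((∀ n, u n = 0) ∧ ∀ n, p n = 0) ∨
    ((∀ n, u n = 1) ∧ ∃ n, p n ≠ 0)}

/-- A semicontinuous bound for a (finite-valued) multifunction `f`: a partial
continuous `g` (coded by `t`) and a lower semicontinuous `b` such that
`f(x) ⊆ {g(x,n) : n < b(x)}`. -/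
def SemicontBound (f : MultiFn Baire) : Prop :=
  ∃ (t : Baire) (b : Baire → ℕ), LowerSemicontinuousOn b f.Dom ∧
    ∀ x ∈ f.Dom, f.val x ⊆ {y | ∃ n < b x, evalB t (pairB x (fun _ => n)) y}

/-! ## Relative partial combinatory algebras and jump operators -/

def app2 {α : Type*} (m : α → α → Option α) (a b c : α) : Option α :=
  (m a b).bind fun ab => m ab c

/-- `(P, α, m)` is a relative partial combinatory algebra: there are combinators
`k, s ∈ P` (shared by the lightface part `P` and the boldface part `α`), `P` is
closed under the application, and `k`, `s` satisfy the usual specifications. -/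
def IsRelPCA {α : Type*} (m : α → α → Option α) (P : Set α) : Prop :=
  ∃ k ∈ P, ∃ s ∈ P,
    (∀ a ∈ P, ∀ b ∈ P, ∀ c, m a b = some c → c ∈ P) ∧
    (∀ a b : α, app2 m k a b = some a) ∧
    (∀ a b : α, ∃ c, app2 m s a b = some c) ∧
    (∀ a b c : α, (app2 m s a b).bind (fun x => m x c) =
      (m a c).bind fun ac => (m b c).bind fun bc => m ac bc)

/-- Composition of set-valued maps (empty value = undefined). -/
def mcompSet {α : Type*} (j₁ j₂ : α → Set α) (x : α) : Set α :=
  {z | (∀ y ∈ j₂ x, (j₁ y).Nonempty) ∧ ∃ y ∈ j₂ x, z ∈ j₁ y}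

/-- `j` is an idempotent jump operator on the relative pca `(P, α, m)`. -/
def IdempotentJump {α : Type*} (m : α → α → Option α) (P : Set α)
    (j : α → Set α) : Prop :=
  (∃ u ∈ P, ∀ a x : α, ∃ w, app2 m u a x = some w ∧
    j w = {z | ∃ y ∈ j x, m a y = some z}) ∧
  (∃ ι ∈ P, ∀ x : α, ∃ w, m ι x = some w ∧ j w = {x}) ∧
  (∃ jj ∈ P, ∀ x : α, ∃ w, m jj x = some w ∧ j w = mcompSet j j x)

/-- `P_j = {a' : a ∈ P, j(a) = {a'}}`. -/
def Pjump {α : Type*} (P : Set α) (j : α → Set α) : Set α :=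
  {a' | ∃ a ∈ P, j a = {a'}}

/-- The new application `a ∗_j b = a' ∗ b` where `j(a) = {a'}`. -/
def appJ {α : Type*} (m : α → α → Option α) (j : α → Set α) (a b : α) : Option α :=
  if h : ∃ a', j a = {a'} then m h.choose b else none

/-- `f` is `(Q, j)`-realizable: some `a ∈ Q` satisfies `j(a x) ⊆ f(x)` for all
`x ∈ dom f`. -/
def JRealizable {α : Type*} (m : α → α → Option α) (Q : Set α) (j : α → Set α)
    (f : MultiFn α) : Prop :=
  ∃ a ∈ Q, ∀ x ∈ f.Dom, ∃ w, m a x = some w ∧ (j w).Nonempty ∧ j w ⊆ f.val x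

/-- The Kleene second algebra application. -/
def k2app (p x : Baire) : Option Baire :=
  if h : ∃ y, evalB p x y then some h.choose else none

/-- The lightface part of the Kleene–Vesley algebra: the computable points. -/
def KVP : Set Baire := {p | Computable p}

/-! ## Real-number principles -/

/-- A regular Cauchy sequence of rationals: `|q n - q m| < 2⁻ⁿ` for `m ≥ n`. -/
def RegCauchy (q : ℕ → ℚ) : Prop := ∀ n m, n ≤ m → |q n - q m| < ((2 : ℚ) ^ n)⁻¹

/-- `x` is the limit of the rational sequence `q`. -/
def limOf (q : ℕ → ℚ) (x : ℝ) : Prop :=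
  Filter.Tendsto (fun n => (q n : ℝ)) Filter.atTop (nhds x)

/-- The real with binary expansion `f`. -/
def binExp (f : ℕ → Bool) : ℝ := ∑' n, if f n then ((2 : ℝ)⁻¹) ^ (n + 1) else 0

/-- `x` is not irrational (stated negatively, as in `BE_ℚ`). -/
def NotIrrational (x : ℝ) : Prop := ¬ ∀ a b : ℤ, a ≠ 0 → (a : ℝ) * x ≠ (b : ℝ)

/-- The binary expansion principle for regular Cauchy rationals. -/
def BEQProp : Prop :=
  ∀ (q : ℕ → ℚ) (x : ℝ), RegCauchy q → limOf q x → x ∈ Set.Icc (0 : ℝ) 1 →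
    NotIrrational x → ∃ f : ℕ → Bool, x = binExp f

/-- Decode a Baire point as a sequence of rationals. -/
def qOf (z : Baire) (n : ℕ) : ℚ := ((Encodable.decode (z n) : Option ℚ)).getD 0

/-- `BE_ℚ` as a multifunction. -/
def BEQmf : MultiFn Baire where
  Dom := {z | RegCauchy (qOf z) ∧
    ∃ x, limOf (qOf z) x ∧ x ∈ Set.Icc (0 : ℝ) 1 ∧ NotIrrational x}
  val := fun z => {y | ∀ x, limOf (qOf z) x → x = binExp (pathOf y)}

/-- `f` is the rational piecewise linear map through the points listed in `l`. -/
def Interp (l : List (ℚ × ℚ)) (f : ℝ → ℝ) : Prop :=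
  (l.map Prod.fst).Pairwise (· < ·) ∧
  (∀ p ∈ l, f (p.1 : ℝ) = (p.2 : ℝ)) ∧
  ∀ i, i + 1 < l.length → ∀ t ∈ Set.Icc (0 : ℝ) 1,
    f ((1 - t) * ((l.getD i (0, 0)).1 : ℝ) + t * ((l.getD (i + 1) (0, 0)).1 : ℝ)) =
      (1 - t) * ((l.getD i (0, 0)).2 : ℝ) + t * ((l.getD (i + 1) (0, 0)).2 : ℝ)

/-- Every point of `l` lies in the `2^{-s-1}`-neighbourhood of the graph of `f`. -/
def ApproxStep (l : List (ℚ × ℚ)) (f : ℝ → ℝ) (s : ℕ) : Prop :=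
  ∀ p ∈ l, ∃ x : ℝ, |(p.1 : ℝ) - x| < (2 : ℝ)⁻¹ ^ (s + 1) ∧
    |(p.2 : ℝ) - f x| < (2 : ℝ)⁻¹ ^ (s + 1)

/-- The intermediate value theorem for rational piecewise linear maps given as
discrete limits. -/
def IVTlinProp : Prop :=
  ∀ (c : ℕ → List (ℚ × ℚ)) (f : ℕ → ℝ → ℝ),
    (∀ s, Interp (c s) (f s)) →
    (∀ s, ApproxStep (c (s + 1)) (f s) s) →
    (¬ ∀ s, ∃ t > s, c t ≠ c s) →
    ∀ s₀, (∀ s ≥ s₀, c s = c s₀) →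
      f s₀ 0 < 0 → 0 < f s₀ 1 → ∃ x ∈ Set.Icc (0 : ℝ) 1, f s₀ x = 0

/-- Decode a Baire point as a sequence of finite lists of rational points. -/
def cOf (z : Baire) (n : ℕ) : List (ℚ × ℚ) :=
  ((Encodable.decode (z n) : Option (List (ℚ × ℚ)))).getD []

/-- `IVT_lin` as a multifunction: the input codes a discrete-limit approximation
of a rational piecewise linear map with a sign change, and outputs are regular
Cauchy names of zeros. -/
def IVTlinMF : MultiFn Baire where
  Dom := {z | (∀ s, ∃ fs : ℝ → ℝ, Interp (cOf z s) fs) ∧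
    (∀ s, ∀ fs : ℝ → ℝ, Interp (cOf z s) fs → ApproxStep (cOf z (s + 1)) fs s) ∧
    (¬ ∀ s, ∃ t > s, cOf z t ≠ cOf z s) ∧
    (∀ s₀, (∀ s ≥ s₀, cOf z s = cOf z s₀) → ∀ g : ℝ → ℝ, Interp (cOf z s₀) g →
      g 0 < 0 ∧ 0 < g 1)}
  val := fun z => {y | RegCauchy (qOf y) ∧
    ∀ s₀, (∀ s ≥ s₀, cOf z s = cOf z s₀) → ∀ g : ℝ → ℝ, Interp (cOf z s₀) g →
      ∃ x, limOf (qOf y) x ∧ x ∈ Set.Icc (0 : ℝ) 1 ∧ g x = 0}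


namespace DneLim

/-! ### Bounded boolean universal quantifier -/

def bAll (n : ℕ) (p : ℕ → Bool) : Bool :=
  ((List.range n).findIdx (fun s => !p s)) == n

lemma bAll_iff (n : ℕ) (p : ℕ → Bool) : bAll n p = true ↔ ∀ s < n, p s = true := by
  unfold bAll
  rw [beq_iff_eq]
  constructor
  · intro h s hs
    have h1 := List.findIdx_eq_length (p := fun s => !p s) (xs := List.range n)
    rw [List.length_range] at h1
    have h2 := (h1.mp h) s (List.mem_range.mpr hs)
    simpa using h2
  · intro h
    have h1 : ∀ x ∈ List.range n, (fun s => !p s) x = false := by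
      intro x hx; simpa using h x (List.mem_range.mp hx)
    have h2 := List.findIdx_eq_length.mpr h1
    rwa [List.length_range] at h2

lemma bAll_congr {n : ℕ} {p q : ℕ → Bool} (h : ∀ s < n, p s = q s) :
    bAll n p = bAll n q := by
  rw [Bool.eq_iff_iff, bAll_iff, bAll_iff]
  constructor
  · intro hp s hs; rw [← h s hs]; exact hp s hs
  · intro hq s hs; rw [h s hs]; exact hq s hs

lemma primrec_bAll {α : Type} [Primcodable α] {n : α → ℕ} {p : α → ℕ → Bool}
    (hn : Primrec n) (hp : Primrec₂ p) : Primrec fun a => bAll (n a) (p a) := by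
  unfold bAll
  exact Primrec.beq.comp
    (Primrec.list_findIdx (Primrec.list_range.comp hn)
      ((Primrec.dom_bool not).comp₂ hp)) hn

/-! ### Codes from list functions -/

def mkCode (g : List ℕ → ℕ → ℕ) : Baire := fun q =>
  Option.casesOn (Encodable.decode (α := List ℕ) q.unpair.1) 0
    (fun l => g l q.unpair.2)

lemma computable_mkCode {g : List ℕ → ℕ → ℕ} (hg : Primrec₂ g) :
    Computable (mkCode g) := by
  have h : Primrec (mkCode g) := by
    unfold mkCode
    exact Primrec.option_casesOn
      (Primrec.decode.comp (Primrec.fst.comp Primrec.unpair))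
      (Primrec.const 0)
      (hg.comp Primrec.snd ((Primrec.snd.comp Primrec.unpair).comp Primrec.fst))
  exact h.to_comp

lemma raw_mkCode (g : List ℕ → ℕ → ℕ) (l : List ℕ) (n : ℕ) :
    raw (mkCode g) l n = match g l n with
      | 0 => none
      | Nat.succ v => some v := by
  unfold raw mkCode
  rw [Nat.unpair_pair]
  simp only [Encodable.encodek]

lemma evalB_mkCode {g : List ℕ → ℕ → ℕ} {x : Baire} {U : ℕ → ℕ}
    (hU : ∀ n k, g (prefixList x k) n ≠ 0 → k = U n) (y : Baire)
    (hy : ∀ n, g (prefixList x (U n)) n = y n + 1) :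
    evalB (mkCode g) x y := by
  intro n
  refine ⟨U n, ?_, ?_⟩
  · rw [raw_mkCode, hy n]
  · intro j hj
    rw [raw_mkCode]
    have h0 : g (prefixList x j) n = 0 := by
      by_contra h
      exact absurd (hU n j h) (Nat.ne_of_lt hj)
    rw [h0]

/-! ### prefixList facts -/

lemma prefixList_length (x : Baire) (k : ℕ) : (prefixList x k).length = k := by
  simp [prefixList]

lemma prefixList_getD (x : Baire) {k i : ℕ} (h : i < k) :
    (prefixList x k).getD i 0 = x i := by
  rw [List.getD_eq_getElem _ _ (by simpa [prefixList_length] using h)]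
  simp [prefixList]

lemma pair_le_pair {a b n : ℕ} (ha : a ≤ n) (hb : b ≤ n) :
    Nat.pair a b ≤ Nat.pair n n := by
  simp only [Nat.pair]
  have h1 : a * a ≤ n * n := Nat.mul_le_mul ha ha
  have h2 : b * b ≤ n * n := Nat.mul_le_mul hb hb
  split <;> split <;> omega

/-! ### The four list functions -/

def aval (l : List ℕ) (n : ℕ) : ℕ :=
  (List.range (n + 1)).findIdx
    (fun n' => bAll (n + 1) (fun m => l.getD (Nat.pair n' m) 0 == 0))

/-- Inner reduction `DNE2 ≤ LimN` : approximate least witness. -/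
def g1 (l : List ℕ) (n : ℕ) : ℕ :=
  if l.length = Nat.pair n n + 1 then aval l n + 1 else 0

/-- Outer reduction `DNE2 ≤ LimN` : second projection. -/
def g3 (l : List ℕ) (n : ℕ) : ℕ :=
  if l.length = n + 1 then (Nat.unpair (l.getD n 0)).2 + 1 else 0

/-- Inner reduction `LimN ≤ DNE2` : the relation `x` is constant on `[n, n+m]`. -/
def g2 (l : List ℕ) (q : ℕ) : ℕ :=
  if l.length = (Nat.unpair q).1 + (Nat.unpair q).2 + 1 then
    (cond (bAll ((Nat.unpair q).2 + 1)
        (fun s => l.getD ((Nat.unpair q).1 + s) 0 == l.getD (Nat.unpair q).1 0))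
      0 1) + 1
  else 0

/-- Outer reduction `LimN ≤ DNE2` : evaluate `x` at `y 0`. -/
def g4 (l : List ℕ) (_ : ℕ) : ℕ :=
  if l.length = (Nat.unpair (l.getD 0 0)).2 + 2 then
    (Nat.unpair (l.getD ((Nat.unpair (l.getD 0 0)).2) 0)).1 + 1
  else 0

/-! ### Primitive recursiveness -/

lemma primrec_g1 : Primrec₂ g1 := by
  unfold g1 aval
  apply Primrec.ite
  · exact Primrec.eq.comp (Primrec.list_length.comp Primrec.fst)
      (Primrec.succ.comp (Primrec₂.natPair.comp Primrec.snd Primrec.snd))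
  · refine Primrec.succ.comp ?_
    refine Primrec.list_findIdx
      (Primrec.list_range.comp (Primrec.succ.comp Primrec.snd)) ?_
    exact primrec_bAll
      (Primrec.succ.comp (Primrec.snd.comp Primrec.fst))
      (Primrec.beq.comp
        ((Primrec.list_getD 0).comp
          (Primrec.fst.comp (Primrec.fst.comp Primrec.fst))
          (Primrec₂.natPair.comp (Primrec.snd.comp Primrec.fst) Primrec.snd))
        (Primrec.const 0))
  · exact Primrec.const 0

lemma primrec_g3 : Primrec₂ g3 := by
  unfold g3
  apply Primrec.ite
  · exact Primrec.eq.comp (Primrec.list_length.comp Primrec.fst)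
      (Primrec.succ.comp Primrec.snd)
  · exact Primrec.succ.comp ((Primrec.snd.comp Primrec.unpair).comp
      ((Primrec.list_getD 0).comp Primrec.fst Primrec.snd))
  · exact Primrec.const 0

lemma primrec_g2 : Primrec₂ g2 := by
  unfold g2
  apply Primrec.ite
  · exact Primrec.eq.comp (Primrec.list_length.comp Primrec.fst)
      (Primrec.succ.comp
        (Primrec.nat_add.comp
          ((Primrec.fst.comp Primrec.unpair).comp Primrec.snd)
          ((Primrec.snd.comp Primrec.unpair).comp Primrec.snd)))
  · refine Primrec.succ.comp ?_
    refine Primrec.cond ?_ (Primrec.const 0) (Primrec.const 1)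
    exact primrec_bAll
      (Primrec.succ.comp ((Primrec.snd.comp Primrec.unpair).comp Primrec.snd))
      (Primrec.beq.comp
        ((Primrec.list_getD 0).comp (Primrec.fst.comp Primrec.fst)
          (Primrec.nat_add.comp
            (((Primrec.fst.comp Primrec.unpair).comp Primrec.snd).comp Primrec.fst)
            Primrec.snd))
        ((Primrec.list_getD 0).comp (Primrec.fst.comp Primrec.fst)
          (((Primrec.fst.comp Primrec.unpair).comp Primrec.snd).comp Primrec.fst)))
  · exact Primrec.const 0

lemma primrec_g4 : Primrec₂ g4 := by
  unfold g4
  apply Primrec.ite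
  · exact Primrec.eq.comp (Primrec.list_length.comp Primrec.fst)
      (Primrec.succ.comp (Primrec.succ.comp ((Primrec.snd.comp Primrec.unpair).comp
        ((Primrec.list_getD 0).comp Primrec.fst (Primrec.const 0)))))
  · exact Primrec.succ.comp ((Primrec.fst.comp Primrec.unpair).comp
      ((Primrec.list_getD 0).comp Primrec.fst
        ((Primrec.snd.comp Primrec.unpair).comp
          ((Primrec.list_getD 0).comp Primrec.fst (Primrec.const 0)))))
  · exact Primrec.const 0

/-! ### The reduction `DNE2 ≤ LimN` -/

lemma red1 : WRedBy DNE2 LimN (mkCode g1) (mkCode g3) := by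
  intro α hα
  have hex : ∃ n, ∀ m, α (Nat.pair n m) = 0 := not_not.mp hα
  set v := Nat.find hex with hv
  have hvspec : ∀ m, α (Nat.pair v m) = 0 := Nat.find_spec hex
  set hx : Baire := fun n => aval (prefixList α (Nat.pair n n + 1)) n with hhx
  have key : ∀ n' < v, ∃ m, α (Nat.pair n' m) ≠ 0 := by
    intro n' hn'
    have h := Nat.find_min hex hn'
    push_neg at h
    exact h
  set N₀ : ℕ := (Finset.range v).sup
    (fun n' => if h : ∃ m, α (Nat.pair n' m) ≠ 0 then Nat.find h else 0) with hN₀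
  have hrefute : ∀ n' < v, ∃ m ≤ N₀, α (Nat.pair n' m) ≠ 0 := by
    intro n' hn'
    have h := key n' hn'
    refine ⟨Nat.find h, ?_, Nat.find_spec h⟩
    have hle := Finset.le_sup (f := fun n' =>
      if h : ∃ m, α (Nat.pair n' m) ≠ 0 then Nat.find h else 0)
      (Finset.mem_range.mpr hn')
    simpa only [dif_pos h] using hle
  have hstable : ∀ n, v ≤ n → N₀ ≤ n → hx n = v := by
    intro n hvn hN₀n
    rw [hhx]
    unfold aval
    have hlen : v < (List.range (n + 1)).length := by
      rw [List.length_range]; omega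
    rw [List.findIdx_eq hlen]
    constructor
    · rw [List.getElem_range]
      rw [bAll_iff]
      intro m hm
      have hmn : m ≤ n := by omega
      rw [prefixList_getD α (Nat.lt_succ_of_le (pair_le_pair hvn hmn))]
      simp [hvspec m]
    · intro j hj
      rw [List.getElem_range]
      apply (Bool.not_eq_true _).mp
      rw [bAll_iff]
      push_neg
      obtain ⟨m, hm, hmne⟩ := hrefute j (by omega)
      refine ⟨m, by omega, ?_⟩
      have hjn : j ≤ n := by omega
      have hmn : m ≤ n := by omega
      rw [prefixList_getD α (Nat.lt_succ_of_le (pair_le_pair hjn hmn))]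
      simpa using hmne
  refine ⟨hx, ?_, ?_, ?_⟩
  · -- evalB (mkCode g1) α hx
    apply evalB_mkCode (U := fun n => Nat.pair n n + 1)
    · intro n k h
      by_contra hne
      apply h
      unfold g1
      rw [prefixList_length, if_neg hne]
    · intro n
      unfold g1
      rw [prefixList_length, if_pos rfl, hhx]
  · -- hx ∈ LimN.Dom
    exact ⟨v, max v N₀, fun n hn =>
      hstable n (le_of_max_le_left hn) (le_of_max_le_right hn)⟩
  · -- outer reduction
    intro y hy
    obtain ⟨v', hy_const, N', hN'⟩ := hy
    refine ⟨y, ?_, ?_⟩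
    · apply evalB_mkCode (U := fun n => n + 1)
      · intro n k h
        by_contra hne
        apply h
        unfold g3
        rw [prefixList_length, if_neg hne]
      · intro n
        unfold g3
        rw [prefixList_length, if_pos rfl,
          prefixList_getD _ (Nat.lt_succ_self n)]
        simp [pairB]
    · have hvv' : v' = v := by
        have h1 := hN' (max (max v N₀) N') (le_max_right _ _)
        have h2 := hstable (max (max v N₀) N')
          (le_trans (le_max_left _ _) (le_max_left _ _))
          (le_trans (le_max_right _ _) (le_max_left _ _))
        exact h1.symm.trans h2
      exact ⟨v, fun m => (hy_const m).trans hvv', hvspec⟩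

/-! ### The reduction `LimN ≤ DNE2` -/

lemma red2 : WRedBy LimN DNE2 (mkCode g2) (mkCode g4) := by
  intro x hx
  obtain ⟨v, N, hN⟩ := hx
  set α : Baire := fun q =>
    cond (bAll ((Nat.unpair q).2 + 1)
      (fun s => x ((Nat.unpair q).1 + s) == x (Nat.unpair q).1)) 0 1 with hα
  have hg2eval : ∀ q,
      g2 (prefixList x ((Nat.unpair q).1 + (Nat.unpair q).2 + 1)) q = α q + 1 := by
    intro q
    unfold g2
    rw [prefixList_length, if_pos rfl, hα]
    congr 2
    apply bAll_congr
    intro s hs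
    rw [prefixList_getD x (by omega), prefixList_getD x (by omega)]
  refine ⟨α, ?_, ?_, ?_⟩
  · -- evalB (mkCode g2) x α
    apply evalB_mkCode (U := fun q => (Nat.unpair q).1 + (Nat.unpair q).2 + 1)
    · intro q k h
      by_contra hne
      apply h
      unfold g2
      rw [prefixList_length, if_neg hne]
    · exact hg2eval
  · -- α ∈ DNE2.Dom
    intro hcon
    apply hcon
    refine ⟨N, fun m => ?_⟩
    rw [hα]
    simp only [Nat.unpair_pair]
    have hb : bAll (m + 1) (fun s => x (N + s) == x N) = true := by
      rw [bAll_iff]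
      intro s hs
      rw [hN (N + s) (Nat.le_add_right N s), hN N (le_refl N)]
      simp
    rw [hb]
    rfl
  · -- outer reduction
    intro y hy
    obtain ⟨nstar, hconst, hzero⟩ := hy
    have hstep : ∀ s, x (nstar + s) = x nstar := by
      intro s
      have h := hzero s
      rw [hα] at h
      simp only [Nat.unpair_pair] at h
      rcases hb : bAll (s + 1) (fun s' => x (nstar + s') == x nstar) with _ | _
      · rw [hb] at h; simp at h
      · have := (bAll_iff _ _).mp hb s (Nat.lt_succ_self s)
        simpa using this
    refine ⟨fun _ => x (y 0), ?_, ?_⟩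
    · -- evalB (mkCode g4) (pairB x y) (fun _ => x (y 0))
      apply evalB_mkCode (U := fun _ => (Nat.unpair (pairB x y 0)).2 + 2)
      · intro n k h
        unfold g4 at h
        by_cases hk : k = 0
        · exfalso
          apply h
          subst hk
          have : prefixList (pairB x y) 0 = [] := rfl
          rw [this]
          simp [List.getD]
        · have hkpos : 0 < k := Nat.pos_of_ne_zero hk
          rw [prefixList_length, prefixList_getD _ hkpos] at h
          by_contra hne
          exact h (if_neg hne)
      · intro n
        unfold g4
        have hpos : 0 < (Nat.unpair (pairB x y 0)).2 + 2 := by omega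
        rw [prefixList_length, prefixList_getD _ hpos, if_pos rfl]
        have hidx : (Nat.unpair (pairB x y 0)).2 < (Nat.unpair (pairB x y 0)).2 + 2 := by
          omega
        rw [prefixList_getD _ hidx]
        simp [pairB]
    · -- membership in LimN.val x
      refine ⟨x (y 0), fun _ => rfl, y 0, fun j hj => ?_⟩
      rw [hconst 0] at hj ⊢
      have : j = nstar + (j - nstar) := by omega
      rw [this, hstep]

end DneLim

/-- `Σ⁰₂-DNE_ℝ ≡_W Lim_ℕ`. -/
theorem dne2_equiv_limN : WEquiv DNE2 LimN := 
  ⟨⟨DneLim.mkCode DneLim.g1, DneLim.mkCode DneLim.g3,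
    DneLim.computable_mkCode DneLim.primrec_g1,
    DneLim.computable_mkCode DneLim.primrec_g3, DneLim.red1⟩,
   ⟨DneLim.mkCode DneLim.g2, DneLim.mkCode DneLim.g4,
    DneLim.computable_mkCode DneLim.primrec_g2,
    DneLim.computable_mkCode DneLim.primrec_g4, DneLim.red2⟩⟩

end
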